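/- Let V be a real inner product space, let f : ℝⁿ → V be differentiable at a point x₀ with f(x₀) ≠ 0, and let A : ℝⁿ →L (V →L V) be a continuous linear map such that A v : V → V is skew-adjoint for every v ∈ ℝⁿ. Then the function x ↦ ‖f(x)‖ is differentiable at x₀, and for every v ∈ ℝⁿ one has |(fderiv (fun x => ‖f x‖) x₀)(v)| ≤ ‖(fderiv f x₀)(v) + (A v)(f x₀)‖. -/
import Mathlib

open scoped RealInnerProductSpace

/-- Pointwise Kato inequality: for a connection `∇_A = d + A` compatible with the fiber
metric (each `A v` skew-adjoint), the norm `‖f‖` is differentiable where `f ≠ 0`, and its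
derivative is dominated direction-by-direction by the covariant derivative of `f`. -/
theorem kato_pointwise
    (n : ℕ) (V : Type*) [NormedAddCommGroup V] [InnerProductSpace ℝ V]
    (f : (Fin n → ℝ) → V) (x₀ : Fin n → ℝ)
    (hf : DifferentiableAt ℝ f x₀) (hf0 : f x₀ ≠ 0)
    (A : (Fin n → ℝ) →L[ℝ] (V →L[ℝ] V))
    (hA : ∀ (v : Fin n → ℝ) (u w : V), ⟪A v u, w⟫ = - ⟪u, A v w⟫) :
    DifferentiableAt ℝ (fun x => ‖f x‖) x₀ ∧
      ∀ v : Fin n → ℝ,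
        |fderiv ℝ (fun x => ‖f x‖) x₀ v| ≤ ‖fderiv ℝ f x₀ v + A v (f x₀)‖ := by
  set f' := fderiv ℝ f x₀ with hf'
  have hsq : HasFDerivAt (fun x => ‖f x‖ ^ 2) (2 • (innerSL ℝ (f x₀)).comp f') x₀ :=
    hf.hasFDerivAt.norm_sq
  have hne : ‖f x₀‖ ^ 2 ≠ 0 := pow_ne_zero 2 (norm_ne_zero_iff.mpr hf0)
  have hsqrt : HasFDerivAt (fun x => Real.sqrt (‖f x‖ ^ 2))
      ((1 / (2 * Real.sqrt (‖f x₀‖ ^ 2))) • (2 • (innerSL ℝ (f x₀)).comp f')) x₀ :=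
    hsq.sqrt hne
  have heq : (fun x => Real.sqrt (‖f x‖ ^ 2)) = fun x => ‖f x‖ := by
    funext x; rw [Real.sqrt_sq (norm_nonneg _)]
  rw [heq] at hsqrt
  have hD : HasFDerivAt (fun x => ‖f x‖)
      (‖f x₀‖⁻¹ • ((innerSL ℝ (f x₀)).comp f')) x₀ := by
    convert hsqrt using 1
    ext w
    rw [Real.sqrt_sq (norm_nonneg _)]
    have h0 : ‖f x₀‖ ≠ 0 := norm_ne_zero_iff.mpr hf0
    simp only [ContinuousLinearMap.smul_apply, two_smul, ContinuousLinearMap.add_apply,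
      smul_eq_mul]
    field_simp
    ring
  refine ⟨hD.differentiableAt, fun v => ?_⟩
  rw [hD.fderiv]
  have hzero : ⟪f x₀, A v (f x₀)⟫ = 0 := by
    have := hA v (f x₀) (f x₀)
    rw [real_inner_comm] at this
    linarith
  have hval : (‖f x₀‖⁻¹ • ((innerSL ℝ (f x₀)).comp f')) v
      = ‖f x₀‖⁻¹ * ⟪f x₀, f' v + A v (f x₀)⟫ := by
    simp [inner_add_right, hzero]
  rw [hval, abs_mul]
  have hCS := abs_real_inner_le_norm (f x₀) (f' v + A v (f x₀))
  have h0 : (0:ℝ) < ‖f x₀‖ := norm_pos_iff.mpr hf0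
  calc |‖f x₀‖⁻¹| * |⟪f x₀, f' v + A v (f x₀)⟫|
      ≤ ‖f x₀‖⁻¹ * (‖f x₀‖ * ‖f' v + A v (f x₀)‖) := by
        rw [abs_of_nonneg (by positivity)]
        exact mul_le_mul_of_nonneg_left hCS (by positivity)
    _ = ‖f' v + A v (f x₀)‖ := by field_simp
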